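/- Let A be a d×d real symmetric positive definite matrix and D a d×d real symmetric positive semidefinite matrix. If there exists ε > 0 such that D ⪰ εI, then A^{-1} D (A+D)^{-1} A (A+D)^{-1} D A^{-1} ⪰ (ε²/(ε + λ_max(A))²) · A^{-1}, where λ_max(A) is the largest eigenvalue of A. -/

import Mathlib

open scoped Classical

/-- The maximum eigenvalue of a (Hermitian) real matrix; junk value `0` otherwise. -/
noncomputable def maxEig {d : ℕ} (M : Matrix (Fin d) (Fin d) ℝ) : ℝ :=
  if h : M.IsHermitian then ⨆ i, h.eigenvalues i else 0

section Helpers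
open Matrix
variable {d : ℕ}

lemma qe_smul_psd {P : Matrix (Fin d) (Fin d) ℝ} (hP : P.PosSemidef) {c : ℝ} (hc : 0 ≤ c) :
    (c • P).PosSemidef := by
  refine Matrix.PosSemidef.of_dotProduct_mulVec_nonneg ?_ ?_
  · show (c • P)ᴴ = c • P
    rw [conjTranspose_smul, hP.1.eq]
    simp
  · intro x
    rw [smul_mulVec, dotProduct_smul]
    exact smul_nonneg hc (hP.dotProduct_mulVec_nonneg x)

lemma qe_conj_psd {V : Matrix (Fin d) (Fin d) ℝ} (f : Fin d → ℝ) (hf : ∀ i, 0 ≤ f i) :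
    (V * diagonal f * star V).PosSemidef := by
  rw [Matrix.star_eq_conjTranspose]
  exact (posSemidef_diagonal_iff.mpr hf).mul_mul_conjTranspose_same V

lemma qe_smul_one_eq_conj {V : Matrix (Fin d) (Fin d) ℝ} (hV1 : V * star V = 1) (c : ℝ) :
    c • (1 : Matrix (Fin d) (Fin d) ℝ) = V * diagonal (fun _ => c) * star V := by
  have : diagonal (fun _ : Fin d => c) = c • (1 : Matrix (Fin d) (Fin d) ℝ) := by
    ext i j
    by_cases h : i = j <;> simp [diagonal, one_apply, h]
  rw [this, Matrix.mul_smul, Matrix.smul_mul, mul_one, hV1]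

lemma qe_conj_mul {V : Matrix (Fin d) (Fin d) ℝ} (hV2 : star V * V = 1) (f g : Fin d → ℝ) :
    (V * diagonal f * star V) * (V * diagonal g * star V)
      = V * diagonal (fun i => f i * g i) * star V := by
  have : (V * diagonal f * star V) * (V * diagonal g * star V)
      = V * (diagonal f * (star V * V) * diagonal g) * star V := by
    simp only [Matrix.mul_assoc]
  rw [this, hV2, mul_one, diagonal_mul_diagonal]

lemma qe_conj_sub (V : Matrix (Fin d) (Fin d) ℝ) (f g : Fin d → ℝ) :
    (V * diagonal f * star V) - (V * diagonal g * star V)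
      = V * diagonal (fun i => f i - g i) * star V := by
  simp only [← diagonal_sub, Matrix.mul_sub, Matrix.sub_mul]

-- L3 : A⁻¹ ⪰ λ⁻¹ I
lemma qe_inv_lb (A : Matrix (Fin d) (Fin d) ℝ) (hA : A.PosDef) :
    (A⁻¹ - (⨆ i, hA.1.eigenvalues i)⁻¹ • (1 : Matrix (Fin d) (Fin d) ℝ)).PosSemidef := by
  rcases Nat.eq_zero_or_pos d with hd | hd
  · subst hd
    have : (A⁻¹ - (⨆ i, hA.1.eigenvalues i)⁻¹ • (1 : Matrix (Fin 0) (Fin 0) ℝ)) = 0 :=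
      Subsingleton.elim _ _
    rw [this]
    exact Matrix.PosSemidef.zero
  set V := (hA.1.eigenvectorUnitary : Matrix (Fin d) (Fin d) ℝ) with hVdef
  have hV1 : V * star V = 1 := mem_unitaryGroup_iff.mp hA.1.eigenvectorUnitary.2
  have hV2 : star V * V = 1 := mem_unitaryGroup_iff'.mp hA.1.eigenvectorUnitary.2
  set μ := hA.1.eigenvalues with hμdef
  have hμpos : ∀ i, 0 < μ i := hA.eigenvalues_pos
  set lam := ⨆ i, μ i with hlam
  have hle : ∀ i, μ i ≤ lam := fun i =>
    le_ciSup (Set.Finite.bddAbove (Set.finite_range μ)) i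
  have : Nonempty (Fin d) := ⟨⟨0, hd⟩⟩
  have hlampos : 0 < lam := lt_of_lt_of_le (hμpos ⟨0, hd⟩) (hle ⟨0, hd⟩)
  have hspec : A = V * diagonal μ * star V := by simpa using hA.1.spectral_theorem
  have hinv : A⁻¹ = V * diagonal (fun i => (μ i)⁻¹) * star V := by
    apply inv_eq_right_inv
    rw [hspec, qe_conj_mul hV2]
    have : (fun i => μ i * (μ i)⁻¹) = fun _ : Fin d => (1:ℝ) :=
      funext fun i => mul_inv_cancel₀ (hμpos i).ne'
    rw [this, diagonal_one, mul_one, hV1]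
  rw [hinv, qe_smul_one_eq_conj hV1, qe_conj_sub]
  apply qe_conj_psd
  intro i
  have : lam⁻¹ ≤ (μ i)⁻¹ := by
    apply inv_anti₀ (hμpos i) (hle i)
  linarith

lemma qe_conj_add (V : Matrix (Fin d) (Fin d) ℝ) (f g : Fin d → ℝ) :
    (V * diagonal f * star V) + (V * diagonal g * star V)
      = V * diagonal (fun i => f i + g i) * star V := by
  simp only [← diagonal_add, Matrix.mul_add, Matrix.add_mul]

lemma qe_eig_lb (P : Matrix (Fin d) (Fin d) ℝ) (hP : P.IsHermitian) (α : ℝ)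
    (h : (P - α • (1 : Matrix (Fin d) (Fin d) ℝ)).PosSemidef) (i : Fin d) :
    α ≤ hP.eigenvalues i := by
  set v : Fin d → ℝ := (WithLp.equiv 2 (Fin d → ℝ)) (hP.eigenvectorBasis i) with hvdef
  have hv : P *ᵥ v = hP.eigenvalues i • v := hP.mulVec_eigenvectorBasis i
  have h2 := h.dotProduct_mulVec_nonneg v
  have hnorm : (star v) ⬝ᵥ v = 1 := by
    have h1 := hP.eigenvectorBasis.orthonormal.1 i
    have := EuclideanSpace.inner_eq_star_dotProduct (𝕜 := ℝ) (hP.eigenvectorBasis i) (hP.eigenvectorBasis i)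
    rw [real_inner_self_eq_norm_sq, h1] at this
    simpa [hvdef] using this.symm
  rw [sub_mulVec, dotProduct_sub, hv, smul_mulVec, one_mulVec, dotProduct_smul,
    dotProduct_smul, hnorm] at h2
  simpa using h2
lemma qe_key_psd {Q : Matrix (Fin d) (Fin d) ℝ} (hQ : Q.PosSemidef) (α : ℝ) (hα : 0 < α)
    (h : (Q - α • (1 : Matrix (Fin d) (Fin d) ℝ)).PosSemidef) :
    ((1 - (1+Q)⁻¹) * (1 - (1+Q)⁻¹) - (α^2/(1+α)^2) • (1 : Matrix (Fin d) (Fin d) ℝ)).PosSemidef := by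
  set V := (hQ.1.eigenvectorUnitary : Matrix (Fin d) (Fin d) ℝ) with hVdef
  have hV1 : V * star V = 1 := mem_unitaryGroup_iff.mp hQ.1.eigenvectorUnitary.2
  have hV2 : star V * V = 1 := mem_unitaryGroup_iff'.mp hQ.1.eigenvectorUnitary.2
  set ν := hQ.1.eigenvalues with hνdef
  have hν : ∀ i, α ≤ ν i := qe_eig_lb Q hQ.1 α h
  have hν0 : ∀ i, (0:ℝ) < 1 + ν i := fun i => by linarith [hν i]
  have hspec : Q = V * diagonal ν * star V := by simpa using hQ.1.spectral_theorem
  have hone : (1 : Matrix (Fin d) (Fin d) ℝ) = V * diagonal (fun _ => (1:ℝ)) * star V := by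
    simpa using qe_smul_one_eq_conj hV1 1
  have hQeq : 1 + Q = V * diagonal (fun i => 1 + ν i) * star V := by
    nth_rewrite 1 [hone]
    rw [hspec, qe_conj_add]
  have hinv : (1 + Q)⁻¹ = V * diagonal (fun i => (1 + ν i)⁻¹) * star V := by
    apply inv_eq_right_inv
    rw [hQeq, qe_conj_mul hV2]
    have : (fun i => (1 + ν i) * (1 + ν i)⁻¹) = fun _ : Fin d => (1:ℝ) :=
      funext fun i => mul_inv_cancel₀ (hν0 i).ne'
    rw [this, diagonal_one, mul_one, hV1]
  have hY : (1 : Matrix (Fin d) (Fin d) ℝ) - (1+Q)⁻¹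
      = V * diagonal (fun i => 1 - (1 + ν i)⁻¹) * star V := by
    nth_rewrite 1 [hone]
    rw [hinv, qe_conj_sub]
  have hfinal : (1 - (1+Q)⁻¹) * (1 - (1+Q)⁻¹) - (α^2/(1+α)^2) • (1 : Matrix (Fin d) (Fin d) ℝ)
      = V * diagonal (fun i => (1 - (1 + ν i)⁻¹) * (1 - (1 + ν i)⁻¹) - α^2/(1+α)^2) * star V := by
    rw [hY, qe_conj_mul hV2, qe_smul_one_eq_conj hV1, qe_conj_sub]
  rw [hfinal]
  apply qe_conj_psd
  intro i
  have e : 1 - (1 + ν i)⁻¹ = ν i / (1 + ν i) := by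
    have hne := (hν0 i).ne'
    field_simp
    ring
  have h1 : α/(1+α) ≤ ν i/(1 + ν i) := by
    rw [div_le_div_iff₀ (by linarith) (hν0 i)]
    nlinarith [hν i]
  have h2 : (0:ℝ) ≤ α/(1+α) := by positivity
  have h3 : (α/(1+α))^2 ≤ (ν i/(1+ν i))^2 := by
    apply pow_le_pow_left₀ h2 h1
  rw [e]
  have : α^2/(1+α)^2 = (α/(1+α))^2 := by rw [div_pow]
  rw [this]
  nlinarith [h3]

lemma qe_conj_cancel (S A X : Matrix (Fin d) (Fin d) ℝ) (hS : S * S = A)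
    (hSiS : S⁻¹ * S = 1) (hSSi : S * S⁻¹ = 1) (c : ℝ) :
    S⁻¹ * ((S * X * S) * (S * X * S) - c • (1 : Matrix (Fin d) (Fin d) ℝ)) * S⁻¹
      = X * A * X - c • (S⁻¹ * S⁻¹) := by
  have hc1 : ∀ M : Matrix (Fin d) (Fin d) ℝ, S⁻¹ * (S * M) = M := fun M => by
    rw [← Matrix.mul_assoc, hSiS, one_mul]
  have hc3 : ∀ M : Matrix (Fin d) (Fin d) ℝ, S * (S * M) = A * M := fun M => by
    rw [← Matrix.mul_assoc, hS]
  simp only [Matrix.mul_sub, Matrix.sub_mul, Matrix.mul_smul, Matrix.smul_mul,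
    Matrix.mul_one, Matrix.one_mul, Matrix.mul_assoc, hc1, hc3, hSSi, hSiS]

open scoped MatrixOrder in
lemma qe_sqrt_exists (A : Matrix (Fin d) (Fin d) ℝ) (hA : A.PosSemidef) :
    ∃ S : Matrix (Fin d) (Fin d) ℝ, S.IsHermitian ∧ S * S = A := by
  have h0 : 0 ≤ A := Matrix.nonneg_iff_posSemidef.mpr hA
  exact ⟨CFC.sqrt A, (Matrix.nonneg_iff_posSemidef.mp (CFC.sqrt_nonneg A)).1,
    CFC.sqrt_mul_sqrt_self A h0⟩

/-- If `D ⪰ εI` with `A` positive definite and `D` positive semidefinite, then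
`A⁻¹ D (A+D)⁻¹ A (A+D)⁻¹ D A⁻¹ ⪰ (ε²/(ε + λ_max(A))²) A⁻¹`. -/
theorem quantization_error_lower_additive {d : ℕ}
    (A D : Matrix (Fin d) (Fin d) ℝ) (hA : A.PosDef) (hD : D.PosSemidef)
    (ε : ℝ) (hε : 0 < ε) (hID : (D - ε • (1 : Matrix (Fin d) (Fin d) ℝ)).PosSemidef) :
    (A⁻¹ * D * (A + D)⁻¹ * A * (A + D)⁻¹ * D * A⁻¹
      - (ε ^ 2 / (ε + maxEig A) ^ 2) • A⁻¹).PosSemidef := by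
  rcases Nat.eq_zero_or_pos d with hd | hd
  · subst hd
    have : (A⁻¹ * D * (A + D)⁻¹ * A * (A + D)⁻¹ * D * A⁻¹
      - (ε ^ 2 / (ε + maxEig A) ^ 2) • A⁻¹) = 0 := Subsingleton.elim _ _
    rw [this]; exact Matrix.PosSemidef.zero
  -- basic facts
  have hleq : maxEig A = ⨆ i, hA.1.eigenvalues i := by
    simp only [maxEig, dif_pos hA.1]
  set lam := maxEig A with hlamdef
  have hle : ∀ i, hA.1.eigenvalues i ≤ lam := fun i => by
    rw [hleq]
    exact le_ciSup (Set.Finite.bddAbove (Set.finite_range _)) i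
  have hlampos : 0 < lam :=
    lt_of_lt_of_le (hA.eigenvalues_pos ⟨0, hd⟩) (hle ⟨0, hd⟩)
  -- square root
  obtain ⟨S, hSsym, hS⟩ := qe_sqrt_exists A hA.posSemidef
  have hAd : IsUnit A.det := hA.det_pos.ne'.isUnit
  have hSd : IsUnit S.det := by
    have hdet : A.det = S.det * S.det := by rw [← hS, det_mul]
    rw [hdet] at hAd
    exact isUnit_of_mul_isUnit_left hAd
  have hADpd : (A + D).PosDef := hA.add_posSemidef hD
  have hADd : IsUnit (A + D).det := hADpd.det_pos.ne'.isUnit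
  -- cancellation helpers
  have hSiS : S⁻¹ * S = 1 := nonsing_inv_mul S hSd
  have hSSi : S * S⁻¹ = 1 := mul_nonsing_inv S hSd
  have hc1 : ∀ M : Matrix (Fin d) (Fin d) ℝ, S⁻¹ * (S * M) = M := fun M => by
    rw [← Matrix.mul_assoc, hSiS, one_mul]
  have hc2 : ∀ M : Matrix (Fin d) (Fin d) ℝ, S * (S⁻¹ * M) = M := fun M => by
    rw [← Matrix.mul_assoc, hSSi, one_mul]
  have hc3 : ∀ M : Matrix (Fin d) (Fin d) ℝ, S * (S * M) = A * M := fun M => by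
    rw [← Matrix.mul_assoc, hS]
  have hAinv : A⁻¹ = S⁻¹ * S⁻¹ := by rw [← hS, Matrix.mul_inv_rev]
  -- Q
  set Q := S⁻¹ * D * S⁻¹ with hQdef
  have hSinvH : S⁻¹ᴴ = S⁻¹ := by rw [Matrix.conjTranspose_nonsing_inv, hSsym.eq]
  have hQpsd : Q.PosSemidef := by
    have := hD.mul_mul_conjTranspose_same S⁻¹
    rwa [hSinvH] at this
  set α := ε / lam with hαdef
  have hαpos : 0 < α := div_pos hε hlampos
  -- Q - α•1 PSD
  have hQα : (Q - α • (1 : Matrix (Fin d) (Fin d) ℝ)).PosSemidef := by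
    have heq : Q - α • (1 : Matrix (Fin d) (Fin d) ℝ)
        = (S⁻¹ * (D - ε • 1) * S⁻¹) + ε • (A⁻¹ - lam⁻¹ • 1) := by
      rw [hAinv]
      simp only [Matrix.mul_sub, Matrix.sub_mul, smul_sub, Matrix.mul_smul, Matrix.smul_mul,
        mul_one, smul_smul, hαdef, div_eq_mul_inv]
      abel
    rw [heq]
    apply Matrix.PosSemidef.add
    · have := hID.mul_mul_conjTranspose_same S⁻¹
      rwa [hSinvH] at this
    · apply qe_smul_psd _ hε.le
      have := qe_inv_lb A hA
      rwa [← hleq] at this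
  -- identities
  have hADB : (A + D) * (A + D)⁻¹ = 1 := mul_nonsing_inv _ hADd
  have hBAD : (A + D)⁻¹ * (A + D) = 1 := nonsing_inv_mul _ hADd
  have hAiA : A⁻¹ * A = 1 := nonsing_inv_mul A hAd
  have hX1 : A⁻¹ * D * (A + D)⁻¹ = A⁻¹ - (A + D)⁻¹ := by
    have h1 : A⁻¹ * (A + D) * (A + D)⁻¹ = A⁻¹ := by
      rw [Matrix.mul_assoc, hADB, mul_one]
    have h2 : A⁻¹ * (A + D) * (A + D)⁻¹
        = A⁻¹ * A * (A + D)⁻¹ + A⁻¹ * D * (A + D)⁻¹ := by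
      rw [Matrix.mul_add, Matrix.add_mul]
    rw [h1, hAiA, one_mul] at h2
    linear_combination (norm := abel) h2.symm
  have hX2 : (A + D)⁻¹ * D * A⁻¹ = A⁻¹ - (A + D)⁻¹ := by
    have h1 : (A + D)⁻¹ * (A + D) * A⁻¹ = A⁻¹ := by
      rw [hBAD, one_mul]
    have h2 : (A + D)⁻¹ * (A + D) * A⁻¹
        = (A + D)⁻¹ * A * A⁻¹ + (A + D)⁻¹ * D * A⁻¹ := by
      rw [Matrix.mul_add, Matrix.add_mul]
    have h3 : (A + D)⁻¹ * A * A⁻¹ = (A + D)⁻¹ := by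
      rw [Matrix.mul_assoc, mul_nonsing_inv A hAd, mul_one]
    rw [h1, h3] at h2
    linear_combination (norm := abel) h2.symm
  -- (1+Q)⁻¹ = S * (A+D)⁻¹ * S
  have hQeq : (1 : Matrix (Fin d) (Fin d) ℝ) + Q = S⁻¹ * (A + D) * S⁻¹ := by
    rw [Matrix.mul_add, Matrix.add_mul, hQdef]
    congr 1
    rw [← hS]
    simp only [Matrix.mul_assoc, hc1, hc2, hSSi, hSiS, Matrix.mul_one]
  have hinvQ : ((1 : Matrix (Fin d) (Fin d) ℝ) + Q)⁻¹ = S * (A + D)⁻¹ * S := by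
    rw [hQeq, Matrix.mul_inv_rev, Matrix.mul_inv_rev, Matrix.nonsing_inv_nonsing_inv S hSd,
      Matrix.mul_assoc]
  have hYX : (1 : Matrix (Fin d) (Fin d) ℝ) - (1 + Q)⁻¹ = S * (A⁻¹ - (A + D)⁻¹) * S := by
    rw [Matrix.mul_sub, Matrix.sub_mul, hinvQ]
    congr 1
    rw [hAinv]
    simp only [Matrix.mul_assoc, hc2, hSSi, hSiS]
  -- main equality
  set c := ε ^ 2 / (ε + lam) ^ 2 with hcdef
  have hc' : c = α ^ 2 / (1 + α) ^ 2 := by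
    have hl0 : lam ≠ 0 := hlampos.ne'
    have hel : ε + lam ≠ 0 := by positivity
    rw [hcdef, hαdef]
    field_simp
    ring
  have hM : A⁻¹ * D * (A + D)⁻¹ * A * (A + D)⁻¹ * D * A⁻¹
      = (A⁻¹ - (A + D)⁻¹) * A * (A⁻¹ - (A + D)⁻¹) := by
    rw [Matrix.mul_assoc (A⁻¹ * D * (A + D)⁻¹ * A) ((A + D)⁻¹) D,
      Matrix.mul_assoc (A⁻¹ * D * (A + D)⁻¹ * A) ((A + D)⁻¹ * D) A⁻¹, hX2, hX1]
  have hmain : A⁻¹ * D * (A + D)⁻¹ * A * (A + D)⁻¹ * D * A⁻¹ - c • A⁻¹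
      = S⁻¹ * (((1 : Matrix (Fin d) (Fin d) ℝ) - (1 + Q)⁻¹)
          * ((1 : Matrix (Fin d) (Fin d) ℝ) - (1 + Q)⁻¹) - c • 1) * S⁻¹ := by
    rw [hM, hYX, hAinv, qe_conj_cancel S A _ hS hSiS hSSi c]
  rw [hmain, hc']
  have hkey := qe_key_psd hQpsd α hαpos hQα
  have := hkey.mul_mul_conjTranspose_same S⁻¹
  rwa [hSinvH] at this

end Helpers
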